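/- arXiv:2404.08172 — 5 statements merged into one kernel-verified Lean document; each statement's English description precedes it below -/
import Mathlib

section
/- Let X, Z, Y be nonempty finite sets, let p : X × Z → ℝ≥0 be a joint probability mass function (Σ_{x,z} p(x,z) = 1), let {ρ^x}_{x∈X} be a quantum encoding of X into ℂ^d, let {F_y}_{y∈Y} be a POVM on ℂ^d, and let γ : Z × Y → ℝ≥0 satisfy Σ_{z∈Z} γ(z,y) = 1 for every y ∈ Y. Then the inference accuracy satisfies Σ_{x∈X} Σ_{z∈Z} Σ_{y∈Y} p(x,z) · Re tr(ρ^x F_y) · γ(z,y) ≤ (Σ_{y∈Y} max_{x∈X} Re tr(ρ^x F_y)) · (max_{z∈Z} Σ_{x∈X} p(x,z)). (This is the paper's Theorem 1: the accuracy P{Ẑ=Z} of any quantum statistical inference procedure is bounded by 2^{Q(X→A)_ρ} times the accuracy max_z P{Z=z} of the best estimator ignoring the input, where the exponentiated maximal quantum leakage 2^{Q(X→A)_ρ} is the supremum over POVMs of Σ_y max_x tr(ρ^x F_y).) -/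
/-!
Bound each likelihood `tr(ρ^x F_y)` by its maximum `m_y` over `x`. The accuracy is then at most
`Σ_y m_y Σ_z γ(z,y) P{Z = z}`, and as `γ(·,y)` is a probability vector, each inner sum is at most
`max_z P{Z = z}`. The step needs `m_y ≥ 0`, which holds because `tr(ρ^x F_y)` is the trace of
the positive semidefinite matrix `C F_y Cᴴ`, where `ρ^x = Cᴴ C`.
-/

open Matrix Finset
open scoped ComplexOrder

open scoped MatrixOrder in
theorem Matrix.PosSemidef.trace_mul_nonneg {𝕜 n : Type*} [RCLike 𝕜] [Fintype n]
    {A B : Matrix n n 𝕜} (hA : A.PosSemidef) (hB : B.PosSemidef) : 0 ≤ (A * B).trace := by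
  classical
  obtain ⟨C, rfl⟩ := CStarAlgebra.nonneg_iff_eq_star_mul_self.mp hA.nonneg
  rw [star_eq_conjTranspose, mul_assoc, trace_mul_comm]
  exact (hB.mul_mul_conjTranspose_same C).trace_nonneg

theorem Finset.sum_mul_le_sum_mul_sup' {ι R : Type*} [Semiring R] [LinearOrder R]
    [IsOrderedRing R] {s : Finset ι} (hs : s.Nonempty) {w f : ι → R}
    (hw : ∀ i ∈ s, 0 ≤ w i) : ∑ i ∈ s, w i * f i ≤ (∑ i ∈ s, w i) * s.sup' hs f := by
  rw [sum_mul]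
  exact sum_le_sum fun i hi => mul_le_mul_of_nonneg_left (le_sup' f hi) (hw i hi)

theorem inference_accuracy_le_sum_sup'_mul_sup' {X Z Y : Type*}
    [Fintype X] [Nonempty X] [Fintype Z] [Nonempty Z] [Fintype Y]
    (p : X → Z → ℝ) (hp0 : ∀ x z, 0 ≤ p x z) (t : Y → X → ℝ) (ht0 : ∀ y x, 0 ≤ t y x)
    (γ : Z → Y → ℝ) (hγ0 : ∀ z y, 0 ≤ γ z y) (hγ1 : ∀ y, ∑ z, γ z y = 1) :
    ∑ x, ∑ z, ∑ y, p x z * t y x * γ z y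
      ≤ (∑ y, univ.sup' univ_nonempty (t y)) * univ.sup' univ_nonempty (fun z => ∑ x, p x z) := by
  set M := univ.sup' univ_nonempty (fun z => ∑ x, p x z)
  have hsup_nonneg (y : Y) : 0 ≤ univ.sup' univ_nonempty (t y) :=
    (ht0 y (Classical.arbitrary X)).trans (le_sup' (t y) (mem_univ _))
  have hx_sum_le (y : Y) (z : Z) :
      ∑ x, p x z * t y x ≤ M * univ.sup' univ_nonempty (t y) :=
    (sum_mul_le_sum_mul_sup' univ_nonempty fun x _ => hp0 x z).trans <|
      mul_le_mul_of_nonneg_right (le_sup' (fun z => ∑ x, p x z) (mem_univ z)) (hsup_nonneg y)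
  calc ∑ x, ∑ z, ∑ y, p x z * t y x * γ z y
      = ∑ y, ∑ z, γ z y * ∑ x, p x z * t y x := by
        simp_rw [Finset.mul_sum]
        rw [Finset.sum_comm, Finset.sum_comm (s := univ (α := Y))]
        refine Finset.sum_congr rfl fun z _ => ?_
        rw [Finset.sum_comm]
        exact Finset.sum_congr rfl fun _ _ => Finset.sum_congr rfl fun _ _ => by ring
    _ ≤ ∑ y, ∑ z, γ z y * (M * univ.sup' univ_nonempty (t y)) := by
        gcongr with y _ z _
        · exact hγ0 z y
        · exact hx_sum_le y z
    _ = (∑ y, univ.sup' univ_nonempty (t y)) * M := by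
        simp_rw [← sum_mul, hγ1, one_mul, sum_mul, mul_comm]

theorem accuracy_le_leakage_mul_prior_general
    {d : ℕ} {X Z Y : Type*}
    [Fintype X] [Nonempty X] [Fintype Z] [Nonempty Z] [Fintype Y]
    (p : X → Z → ℝ) (hp0 : ∀ x z, 0 ≤ p x z)
    (ρ : X → Matrix (Fin d) (Fin d) ℂ)
    (hρ : ∀ x, (ρ x).PosSemidef ∧ (ρ x).trace = 1)
    (F : Y → Matrix (Fin d) (Fin d) ℂ)
    (hF : ∀ y, (F y).PosSemidef)
    (γ : Z → Y → ℝ) (hγ0 : ∀ z y, 0 ≤ γ z y) (hγ1 : ∀ y, ∑ z, γ z y = 1) :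
    ∑ x, ∑ z, ∑ y, p x z * ((ρ x * F y).trace.re) * γ z y
      ≤ (∑ y, Finset.univ.sup' Finset.univ_nonempty fun x => ((ρ x * F y).trace.re))
        * Finset.univ.sup' Finset.univ_nonempty (fun z => ∑ x, p x z) :=
  inference_accuracy_le_sum_sup'_mul_sup' p hp0 (fun y x => (ρ x * F y).trace.re)
    (fun y x => (Complex.nonneg_iff.mp ((hρ x).1.trace_mul_nonneg (hF y))).1) γ hγ0 hγ1

/-- **Theorem 1.** The accuracy `P{Ẑ = Z}` of any quantum statistical inference procedure
(encode `x ↦ ρ x`, measure with the POVM `F`, post-process with `γ`) is bounded by the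
exponentiated maximal quantum leakage `Σ_y max_x tr(ρ^x F_y)` times the accuracy
`max_z P{Z = z}` of the best estimator ignoring the input. -/
theorem accuracy_le_leakage_mul_prior
    {d : ℕ} {X Z Y : Type*}
    [Fintype X] [Nonempty X] [Fintype Z] [Nonempty Z] [Fintype Y] [Nonempty Y]
    (p : X → Z → ℝ) (hp0 : ∀ x z, 0 ≤ p x z) (hp1 : ∑ x, ∑ z, p x z = 1)
    (ρ : X → Matrix (Fin d) (Fin d) ℂ)
    (hρ : ∀ x, (ρ x).PosSemidef ∧ (ρ x).trace = 1)
    (F : Y → Matrix (Fin d) (Fin d) ℂ)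
    (hF : ∀ y, (F y).PosSemidef) (hFsum : ∑ y, F y = 1)
    (γ : Z → Y → ℝ) (hγ0 : ∀ z y, 0 ≤ γ z y) (hγ1 : ∀ y, ∑ z, γ z y = 1) :
    ∑ x, ∑ z, ∑ y, p x z * ((ρ x * F y).trace.re) * γ z y
      ≤ (∑ y, Finset.univ.sup' Finset.univ_nonempty fun x => ((ρ x * F y).trace.re))
        * Finset.univ.sup' Finset.univ_nonempty (fun z => ∑ x, p x z) :=
  accuracy_le_leakage_mul_prior_general p hp0 ρ hρ F hF γ hγ0 hγ1
end

section
/- Let X, Z, Y be nonempty finite sets, let p : X × Z → ℝ≥0 be a joint probability mass function, let {ρ^x}_{x∈X} be a quantum encoding of X into ℂ^d, let {F_y}_{y∈Y} be a POVM on ℂ^d, and let γ : Z × Y → ℝ≥0 satisfy Σ_{z∈Z} γ(z,y) = 1 for every y ∈ Y. Then Σ_{x,z,y} p(x,z) · Re tr(ρ^x F_y) · γ(z,y) ≤ d² · max_{z∈Z} Σ_{x∈X} p(x,z). (This is the dimension-part of the paper's Corollary 1: accuracy is bounded in terms of the dimension d of the Hilbert space, i.e., the number of qubits, independently of the inference task;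 it implies the minimum number of qubits for accurate inference must exceed log₂|X| / 2.) -/
open Matrix Finset
open scoped ComplexOrder

lemma re_trace_conjTranspose_mul_self {n : Type*} [Fintype n]
    (M : Matrix n n ℂ) :
    (Mᴴ * M).trace.re = ∑ i, ∑ j, ‖M i j‖ ^ 2 := by
  simp only [Matrix.trace, Matrix.diag, Matrix.mul_apply, Matrix.conjTranspose_apply]
  rw [Complex.re_sum]
  rw [Finset.sum_comm]
  congr 1
  ext i
  rw [Complex.re_sum]
  congr 1
  ext j
  rw [mul_comm, Complex.star_def, Complex.mul_conj]
  rw [Complex.ofReal_re, Complex.normSq_eq_norm_sq]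

open scoped MatrixOrder Matrix.Norms.L2Operator in
lemma Matrix.posSemidef_iff_eq_transpose_mul_self {n : Type*} [Fintype n]
    {A : Matrix n n ℂ} : A.PosSemidef ↔ ∃ B : Matrix n n ℂ, A = Bᴴ * B := by
  classical
  constructor
  · intro hA
    obtain ⟨B, hB⟩ := CStarAlgebra.nonneg_iff_eq_star_mul_self.mp hA.nonneg
    exact ⟨B, hB⟩
  · rintro ⟨B, rfl⟩
    exact Matrix.posSemidef_conjTranspose_mul_self B

lemma re_trace_mul_nonneg {n : Type*} [Fintype n] {A B : Matrix n n ℂ}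
    (hA : A.PosSemidef) (hB : B.PosSemidef) : 0 ≤ (A * B).trace.re := by
  obtain ⟨C, rfl⟩ := Matrix.posSemidef_iff_eq_transpose_mul_self.mp hA
  obtain ⟨D, rfl⟩ := Matrix.posSemidef_iff_eq_transpose_mul_self.mp hB
  have key : (Cᴴ * C * (Dᴴ * D)).trace = ((C * Dᴴ)ᴴ * (C * Dᴴ)).trace := by
    rw [show (C * Dᴴ)ᴴ * (C * Dᴴ) = D * (Cᴴ * C * Dᴴ) by
      simp [Matrix.conjTranspose_mul, Matrix.mul_assoc]]
    rw [Matrix.trace_mul_comm D (Cᴴ * C * Dᴴ), Matrix.mul_assoc (Cᴴ * C)]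
  rw [key, re_trace_conjTranspose_mul_self]
  positivity

lemma re_trace_mul_le {n : Type*} [Fintype n] {A B : Matrix n n ℂ}
    (hA : A.PosSemidef) (hB : B.PosSemidef) :
    (A * B).trace.re ≤ A.trace.re * B.trace.re := by
  obtain ⟨C, rfl⟩ := Matrix.posSemidef_iff_eq_transpose_mul_self.mp hA
  obtain ⟨D, rfl⟩ := Matrix.posSemidef_iff_eq_transpose_mul_self.mp hB
  have key : (Cᴴ * C * (Dᴴ * D)).trace = ((C * Dᴴ)ᴴ * (C * Dᴴ)).trace := by
    rw [show (C * Dᴴ)ᴴ * (C * Dᴴ) = D * (Cᴴ * C * Dᴴ) by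
      simp [Matrix.conjTranspose_mul, Matrix.mul_assoc]]
    rw [Matrix.trace_mul_comm D (Cᴴ * C * Dᴴ), Matrix.mul_assoc (Cᴴ * C)]
  rw [key, re_trace_conjTranspose_mul_self, re_trace_conjTranspose_mul_self,
    re_trace_conjTranspose_mul_self]
  calc ∑ i, ∑ j, ‖(C * Dᴴ) i j‖ ^ 2
      ≤ ∑ i, ∑ j, (∑ k, ‖C i k‖ ^ 2) * (∑ k, ‖D j k‖ ^ 2) := by
        refine Finset.sum_le_sum fun i _ => Finset.sum_le_sum fun j _ => ?_
        have h1 : ‖(C * Dᴴ) i j‖ ≤ ∑ k, ‖C i k‖ * ‖D j k‖ := by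
          rw [Matrix.mul_apply]
          refine (norm_sum_le _ _).trans (le_of_eq ?_)
          congr 1; ext k
          rw [norm_mul, Matrix.conjTranspose_apply, norm_star]
        calc ‖(C * Dᴴ) i j‖ ^ 2 ≤ (∑ k, ‖C i k‖ * ‖D j k‖) ^ 2 := by
              exact pow_le_pow_left₀ (norm_nonneg _) h1 2
          _ ≤ (∑ k, ‖C i k‖ ^ 2) * (∑ k, ‖D j k‖ ^ 2) :=
              Finset.sum_mul_sq_le_sq_mul_sq _ _ _
    _ = (∑ i, ∑ k, ‖C i k‖ ^ 2) * (∑ j, ∑ k, ‖D j k‖ ^ 2) := by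
        rw [← Finset.sum_mul_sum]
  -- indices in trace formula are (i,j) with ‖C i j‖ summed as ∑ i, ∑ j; matches after sum_comm?

lemma re_trace_nonneg {n : Type*} [Fintype n] {A : Matrix n n ℂ}
    (hA : A.PosSemidef) : 0 ≤ A.trace.re := by
  obtain ⟨C, rfl⟩ := Matrix.posSemidef_iff_eq_transpose_mul_self.mp hA
  rw [re_trace_conjTranspose_mul_self]
  positivity

/-- The dimension-part of **Corollary 1**: the accuracy of any quantum inference procedure
with a `d`-dimensional quantum system is at most `d²` times the accuracy of the best
prior-only estimator. -/
theorem accuracy_le_dim_sq_mul_prior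
    {d : ℕ} {X Z Y : Type*}
    [Fintype X] [Nonempty X] [Fintype Z] [Nonempty Z] [Fintype Y] [Nonempty Y]
    (p : X → Z → ℝ) (hp0 : ∀ x z, 0 ≤ p x z) (hp1 : ∑ x, ∑ z, p x z = 1)
    (ρ : X → Matrix (Fin d) (Fin d) ℂ)
    (hρ : ∀ x, (ρ x).PosSemidef ∧ (ρ x).trace = 1)
    (F : Y → Matrix (Fin d) (Fin d) ℂ)
    (hF : ∀ y, (F y).PosSemidef) (hFsum : ∑ y, F y = 1)
    (γ : Z → Y → ℝ) (hγ0 : ∀ z y, 0 ≤ γ z y) (hγ1 : ∀ y, ∑ z, γ z y = 1) :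
    ∑ x, ∑ z, ∑ y, p x z * ((ρ x * F y).trace.re) * γ z y
      ≤ (d : ℝ) ^ 2
        * Finset.univ.sup' Finset.univ_nonempty (fun z => ∑ x, p x z) := by
  set M := Finset.univ.sup' Finset.univ_nonempty (fun z => ∑ x, p x z) with hM
  have hzM : ∀ z : Z, ∑ x, p x z ≤ M := fun z => Finset.le_sup' (fun z => ∑ x, p x z) (mem_univ z)
  have hM0 : 0 ≤ M := by
    obtain ⟨z⟩ := (inferInstance : Nonempty Z)
    exact le_trans (Finset.sum_nonneg fun x _ => hp0 x z) (hzM z)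
  have htr : ∀ x y, ((ρ x * F y).trace.re) ≤ (F y).trace.re := fun x y => by
    have h := re_trace_mul_le (hρ x).1 (hF y)
    rwa [(hρ x).2, Complex.one_re, one_mul] at h
  have hFtr0 : ∀ y, 0 ≤ (F y).trace.re := fun y => re_trace_nonneg (hF y)
  have hFtrsum : ∑ y, (F y).trace.re = (d : ℝ) := by
    rw [← Complex.re_sum, ← Matrix.trace_sum, hFsum, Matrix.trace_one]
    simp
  calc ∑ x, ∑ z, ∑ y, p x z * ((ρ x * F y).trace.re) * γ z y
      ≤ ∑ x, ∑ z, ∑ y, p x z * (F y).trace.re * γ z y := by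
        refine Finset.sum_le_sum fun x _ => Finset.sum_le_sum fun z _ =>
          Finset.sum_le_sum fun y _ => ?_
        exact mul_le_mul_of_nonneg_right
          (mul_le_mul_of_nonneg_left (htr x y) (hp0 x z)) (hγ0 z y)
    _ = ∑ z, ∑ x, ∑ y, p x z * (F y).trace.re * γ z y := Finset.sum_comm
    _ = ∑ z, ∑ y, ∑ x, p x z * (F y).trace.re * γ z y :=
        Finset.sum_congr rfl fun z _ => Finset.sum_comm
    _ = ∑ y, ∑ z, ∑ x, p x z * (F y).trace.re * γ z y := Finset.sum_comm
    _ = ∑ y, (F y).trace.re * ∑ z, (∑ x, p x z) * γ z y := by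
        refine Finset.sum_congr rfl fun y _ => ?_
        rw [Finset.mul_sum]
        refine Finset.sum_congr rfl fun z _ => ?_
        rw [Finset.sum_mul, Finset.mul_sum]
        exact Finset.sum_congr rfl fun x _ => by ring
    _ ≤ ∑ y, (F y).trace.re * M := by
        refine Finset.sum_le_sum fun y _ => mul_le_mul_of_nonneg_left ?_ (hFtr0 y)
        calc ∑ z, (∑ x, p x z) * γ z y
            ≤ ∑ z, M * γ z y :=
              Finset.sum_le_sum fun z _ =>
                mul_le_mul_of_nonneg_right (hzM z) (hγ0 z y)
          _ = M := by rw [← Finset.mul_sum, hγ1 y, mul_one]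
    _ = (d : ℝ) * M := by rw [← Finset.sum_mul, hFtrsum]
    _ ≤ (d : ℝ) ^ 2 * M := by
        refine mul_le_mul_of_nonneg_right ?_ hM0
        exact_mod_cast Nat.le_self_pow two_ne_zero d
end

section
/- Let {ρ^x}_{x∈X} be a quantum encoding of a nonempty finite set X into ℂ^d and let {F_y}_{y∈Y} be a POVM on ℂ^d. Then there exist unit vectors {ψ_x}_{x∈X} in ℂ^d such that Σ_{y∈Y} max_{x∈X} Re ⟨ψ_x, F_y ψ_x⟩ ≥ Σ_{y∈Y} max_{x∈X} Re tr(ρ^x F_y). (This is the paper's Proposition 1: the maximum of the exponentiated maximal quantum leakage over encoding ensembles is attained by pure states, i.e., rank-one density operators ρ^x = |ψ_x⟩⟨ψ_x|, since a convex function on the product of the sets of density operators attains its maximum at extreme points, which are the pure states.) -/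
open Matrix Finset
open scoped ComplexOrder

lemma spectral_aux {d : ℕ} {ρ : Matrix (Fin d) (Fin d) ℂ} (h1 : ρ.PosSemidef) :
    ∃ (v : Fin d → Fin d → ℂ) (lam : Fin d → ℝ),
      (∀ i, 0 ≤ lam i) ∧ (∀ i, star (v i) ⬝ᵥ v i = 1) ∧
      ∀ G : Matrix (Fin d) (Fin d) ℂ,
        (ρ * G).trace = ∑ i, (lam i : ℂ) * (star (v i) ⬝ᵥ G.mulVec (v i)) := by
  have hH := h1.1
  set U : Matrix (Fin d) (Fin d) ℂ := (hH.eigenvectorUnitary : Matrix (Fin d) (Fin d) ℂ) with hU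
  refine ⟨fun i => ⇑(hH.eigenvectorBasis i), hH.eigenvalues,
    fun i => h1.eigenvalues_nonneg i, ?_, ?_⟩
  · intro i
    have h := orthonormal_iff_ite.mp hH.eigenvectorBasis.orthonormal i i
    rw [EuclideanSpace.inner_eq_star_dotProduct] at h
    rw [dotProduct_comm]; simpa using h
  · intro G
    have hcol : ∀ k i, U k i = hH.eigenvectorBasis i k := fun k i => rfl
    conv_lhs => rw [hH.spectral_theorem]
    rw [Unitary.conjStarAlgAut_apply, ← hU]
    rw [show (U * diagonal (RCLike.ofReal ∘ hH.eigenvalues) * star U * G)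
        = U * (diagonal (RCLike.ofReal ∘ hH.eigenvalues) * (star U * G)) by
      simp [mul_assoc]]
    rw [trace_mul_comm, show (diagonal (RCLike.ofReal ∘ hH.eigenvalues) * (star U * G)) * U
        = diagonal (RCLike.ofReal ∘ hH.eigenvalues) * (star U * G * U) by simp [mul_assoc]]
    have hdiag : ∀ (c : Fin d → ℂ) (M : Matrix (Fin d) (Fin d) ℂ),
        (diagonal c * M).trace = ∑ i, c i * M i i := by
      intro c M
      simp [Matrix.trace, Matrix.diag, Matrix.diagonal_mul]
    rw [hdiag]
    refine Finset.sum_congr rfl fun i _ => ?_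
    congr 1
    simp only [Matrix.mul_apply, dotProduct, mulVec, star_apply, Matrix.star_apply,
      Finset.sum_mul, Finset.mul_sum, hcol]
    rw [Finset.sum_comm]
    refine Finset.sum_congr rfl fun k _ => Finset.sum_congr rfl fun l _ => by
      simp only [Pi.star_apply]; ring

lemma maxswap {X Y : Type*} [Fintype X] [Nonempty X] [Fintype Y] {d : ℕ}
    (w : X → Fin d → ℝ) (hw : ∀ x i, 0 ≤ w x i) (hw1 : ∀ x, ∑ i, w x i = 1)
    (q : X → Fin d → Y → ℝ) :
    ∃ σ : X → Fin d,
      ∑ y, univ.sup' univ_nonempty (fun x => ∑ i, w x i * q x i y)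
        ≤ ∑ y, univ.sup' univ_nonempty (fun x => q x (σ x) y) := by
  classical
  set W : (X → Fin d) → ℝ := fun σ => ∏ x, w x (σ x) with hWdef
  have hWnn : ∀ σ, 0 ≤ W σ := fun σ => Finset.prod_nonneg fun x _ => hw x (σ x)
  have hWsum : ∑ σ : X → Fin d, W σ = 1 := by
    rw [hWdef, ← Fintype.prod_sum]
    simp [hw1]
  have hmarg : ∀ (x0 : X) (g : Fin d → ℝ),
      ∑ σ : X → Fin d, W σ * g (σ x0) = ∑ i, w x0 i * g i := by
    intro x0 g
    have h1 : ∀ σ : X → Fin d,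
        W σ * g (σ x0) = ∏ x, (w x (σ x) * if x = x0 then g (σ x) else 1) := by
      intro σ
      rw [Finset.prod_mul_distrib]
      congr 1
      simp [Finset.prod_ite_eq' Finset.univ x0 (fun x => g (σ x))]
    simp_rw [h1]
    rw [← Fintype.prod_sum (fun (x : X) (i : Fin d) => w x i * if x = x0 then g i else 1)]
    have h2 : ∀ x : X, (∑ i, (w x i * if x = x0 then g i else 1))
        = if x = x0 then (∑ i, w x0 i * g i) else 1 := by
      intro x; by_cases hx : x = x0 <;> simp [hx, hw1 x]
    simp_rw [h2]
    simp [Finset.prod_ite_eq' Finset.univ x0 (fun _ => ∑ i, w x0 i * g i)]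
  set L : ℝ := ∑ y, univ.sup' univ_nonempty (fun x => ∑ i, w x i * q x i y) with hL
  set A : (X → Fin d) → ℝ := fun σ => ∑ y, univ.sup' univ_nonempty (fun x => q x (σ x) y)
    with hA
  by_contra hcon
  push_neg at hcon
  have hLle : L ≤ ∑ σ : X → Fin d, W σ * A σ := by
    have key : ∀ y : Y, univ.sup' univ_nonempty (fun x => ∑ i, w x i * q x i y)
        ≤ ∑ σ : X → Fin d, W σ * univ.sup' univ_nonempty (fun x => q x (σ x) y) := by
      intro y
      obtain ⟨x0, -, hx0⟩ := Finset.exists_mem_eq_sup' univ_nonempty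
        (fun x => ∑ i, w x i * q x i y)
      rw [hx0, ← hmarg x0 (fun i => q x0 i y)]
      refine Finset.sum_le_sum fun σ _ => mul_le_mul_of_nonneg_left ?_ (hWnn σ)
      exact Finset.le_sup' (fun x => q x (σ x) y) (Finset.mem_univ x0)
    calc L ≤ ∑ y, ∑ σ : X → Fin d, W σ * univ.sup' univ_nonempty (fun x => q x (σ x) y) :=
          Finset.sum_le_sum fun y _ => key y
      _ = ∑ σ : X → Fin d, W σ * A σ := by
          rw [Finset.sum_comm]; simp [hA, Finset.mul_sum]
  obtain ⟨σ0, hσ0⟩ : ∃ σ : X → Fin d, 0 < W σ := by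
    by_contra h
    push_neg at h
    have : ∑ σ : X → Fin d, W σ ≤ 0 := Finset.sum_nonpos fun σ _ => h σ
    linarith [hWsum]
  have hlt : ∑ σ : X → Fin d, W σ * A σ < ∑ σ : X → Fin d, W σ * L := by
    refine Finset.sum_lt_sum (fun σ _ => mul_le_mul_of_nonneg_left (hcon σ).le (hWnn σ))
      ⟨σ0, Finset.mem_univ _, mul_lt_mul_of_pos_left (hcon σ0) hσ0⟩
  rw [← Finset.sum_mul, hWsum, one_mul] at hlt
  linarith

/-- **Proposition 1** (pure states suffice): for any quantum encoding `{ρ^x}` and any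
POVM `{F_y}`, there exist unit vectors `{ψ_x}` (i.e. pure states `|ψ_x⟩⟨ψ_x|`) whose
value `Σ_y max_x ⟨ψ_x, F_y ψ_x⟩` is at least `Σ_y max_x tr(ρ^x F_y)`. -/
theorem pure_states_attain_max
    {d : ℕ} {X Y : Type*} [Fintype X] [Nonempty X] [Fintype Y]
    (ρ : X → Matrix (Fin d) (Fin d) ℂ)
    (hρ : ∀ x, (ρ x).PosSemidef ∧ (ρ x).trace = 1)
    (F : Y → Matrix (Fin d) (Fin d) ℂ)
    (hF : ∀ y, (F y).PosSemidef) (hFsum : ∑ y, F y = 1) :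
    ∃ ψ : X → (Fin d → ℂ),
      (∀ x, star (ψ x) ⬝ᵥ ψ x = 1) ∧
      (∑ y, Finset.univ.sup' Finset.univ_nonempty fun x => ((ρ x * F y).trace.re))
        ≤ ∑ y, Finset.univ.sup' Finset.univ_nonempty fun x =>
            ((star (ψ x) ⬝ᵥ (F y).mulVec (ψ x)).re) := by
  classical
  choose v lam hnn hunit htr using fun x => spectral_aux (hρ x).1
  have hw1 : ∀ x, ∑ i, lam x i = 1 := by
    intro x
    have h := htr x 1
    rw [mul_one, (hρ x).2] at h
    simp only [Matrix.one_mulVec, hunit, mul_one] at h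
    exact_mod_cast h.symm
  set q : X → Fin d → Y → ℝ := fun x i y => (star (v x i) ⬝ᵥ (F y).mulVec (v x i)).re with hq
  have htrre : ∀ x y, (ρ x * F y).trace.re = ∑ i, lam x i * q x i y := by
    intro x y
    rw [htr x (F y), Complex.re_sum]
    refine Finset.sum_congr rfl fun i _ => ?_
    simp [hq, Complex.re_ofReal_mul]
  obtain ⟨σ, hσ⟩ := maxswap lam hnn hw1 q
  refine ⟨fun x => v x (σ x), fun x => hunit x (σ x), ?_⟩
  calc (∑ y, Finset.univ.sup' Finset.univ_nonempty fun x => ((ρ x * F y).trace.re))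
      = ∑ y, univ.sup' univ_nonempty (fun x => ∑ i, lam x i * q x i y) := by
        refine Finset.sum_congr rfl fun y _ => ?_
        exact Finset.sup'_congr _ rfl fun x _ => htrre x y
    _ ≤ ∑ y, univ.sup' univ_nonempty (fun x => q x (σ x) y) := hσ
    _ = _ := rfl
end

section
/- Let X be a nonempty finite set and let {e_x}_{x∈X} be an orthonormal family of vectors in ℂ^d (which requires d ≥ |X|). Define the basis encoding ρ^x := e_x e_x† (the rank-one orthogonal projection onto e_x). Then there exists a finite set Y and a POVM {F_y}_{y∈Y} on ℂ^d such that Σ_{y∈Y} max_{x∈X} Re tr(ρ^x F_y) = |X|. Concretely, one may take Y = X ∪ {∗} with F_x = e_x e_x† for x ∈ X and F_∗ = I − Σ_{x∈X} e_x e_x†. (This is the achievability part of the paper's Proposition 2: when d ≥ |X|, basis encoding attains maximal quantum leakage Q(X→A)_ρ = log₂|X|.) -/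
open Matrix Finset
open scoped ComplexOrder

section aux
variable {d : ℕ} {X : Type*} [Fintype X] [DecidableEq X]

lemma psd_vecMulVec (u : Fin d → ℂ) : (Matrix.vecMulVec u (star u)).PosSemidef := by
  have h : Matrix.vecMulVec u (star u) = (Matrix.replicateRow Unit (star u))ᴴ * Matrix.replicateRow Unit (star u) := by
    rw [Matrix.vecMulVec_eq Unit]
    congr 1
    ext i j
    simp [Matrix.replicateRow, Matrix.replicateCol, Matrix.conjTranspose_apply]
  rw [h]
  exact Matrix.posSemidef_conjTranspose_mul_self _

variable (e : X → (Fin d → ℂ))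
  (he : ∀ x x', star (e x) ⬝ᵥ e x' = if x = x' then 1 else 0)

include he

lemma vmv_mul_vmv (x x' : X) :
    Matrix.vecMulVec (e x) (star (e x)) * Matrix.vecMulVec (e x') (star (e x'))
      = if x = x' then Matrix.vecMulVec (e x) (star (e x)) else 0 := by
  have key : Matrix.vecMulVec (e x) (star (e x)) * Matrix.vecMulVec (e x') (star (e x'))
      = (star (e x) ⬝ᵥ e x') • Matrix.vecMulVec (e x) (star (e x')) := by
    ext i j
    simp only [Matrix.mul_apply, Matrix.vecMulVec_apply, Matrix.smul_apply, smul_eq_mul,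
      dotProduct, Finset.sum_mul, Pi.star_apply]
    exact Finset.sum_congr rfl fun k _ => by ring
  rw [key, he]
  split_ifs with h
  · subst h; simp
  · simp

lemma trace_vmv (x : X) : (Matrix.vecMulVec (e x) (star (e x))).trace = 1 := by
  have h1 := he x x
  rw [if_pos rfl] at h1
  simp only [dotProduct, Pi.star_apply] at h1
  simp only [Matrix.trace, Matrix.diag, Matrix.vecMulVec_apply, Pi.star_apply]
  rw [← h1]
  exact Finset.sum_congr rfl fun i _ => by ring

lemma trace_vmv_mul_vmv (x x' : X) :
    (Matrix.vecMulVec (e x) (star (e x)) * Matrix.vecMulVec (e x') (star (e x'))).trace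
      = if x = x' then 1 else 0 := by
  rw [vmv_mul_vmv e he]
  split_ifs with h
  · exact trace_vmv e he x
  · simp

lemma psd_residual :
    (1 - ∑ x, Matrix.vecMulVec (e x) (star (e x))).PosSemidef := by
  set Q := ∑ x, Matrix.vecMulVec (e x) (star (e x)) with hQ
  have hQH : Qᴴ = Q := by
    rw [hQ, Matrix.conjTranspose_sum]
    exact Finset.sum_congr rfl fun x _ => (psd_vecMulVec (e x)).1
  have hQQ : Q * Q = Q := by
    rw [hQ, Finset.sum_mul_sum]
    rw [Finset.sum_congr rfl fun x (_ : x ∈ Finset.univ) =>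
      Finset.sum_congr rfl fun x' _ => vmv_mul_vmv e he x x']
    simp
  have key : 1 - Q = (1 - Q)ᴴ * (1 - Q) := by
    rw [Matrix.conjTranspose_sub, hQH, Matrix.conjTranspose_one,
      sub_mul, one_mul, mul_sub, mul_one, hQQ]
    abel
  rw [key]
  exact Matrix.posSemidef_conjTranspose_mul_self _

end aux

/-- Achievability part of **Proposition 2**: if `{e_x}` is an orthonormal family in `ℂ^d`
(so `d ≥ |X|`), then for the basis encoding `ρ^x = e_x e_x†` there exists a finite set
`Y` and a POVM `{F_y}` with `Σ_y max_x tr(ρ^x F_y) = |X|`, i.e. basis encoding attains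
maximal quantum leakage `log₂ |X|`. -/
theorem basis_encoding_attains_card
    {d : ℕ} {X : Type*} [Fintype X] [Nonempty X] [DecidableEq X]
    (e : X → (Fin d → ℂ))
    (he : ∀ x x', star (e x) ⬝ᵥ e x' = if x = x' then 1 else 0) :
    ∃ (Y : Type) (instY : Fintype Y) (F : Y → Matrix (Fin d) (Fin d) ℂ),
      letI := instY
      (∀ y, (F y).PosSemidef) ∧
      (∑ y, F y) = 1 ∧
      (∑ y, Finset.univ.sup' Finset.univ_nonempty fun x =>
          ((Matrix.vecMulVec (e x) (star (e x)) * F y).trace.re))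
        = (Fintype.card X : ℝ) := by
  classical
  set σ : X ≃ Fin (Fintype.card X) := Fintype.equivFin X with hσ
  refine ⟨(Fin (Fintype.card X) ⊕ Unit : Type), inferInstance,
    Sum.elim (fun i => Matrix.vecMulVec (e (σ.symm i)) (star (e (σ.symm i))))
      (fun _ => 1 - ∑ x, Matrix.vecMulVec (e x) (star (e x))), ?_, ?_, ?_⟩
  · rintro (i | u)
    · exact psd_vecMulVec (e (σ.symm i))
    · exact psd_residual e he
  · rw [Fintype.sum_sum_type]
    simp only [Sum.elim_inl, Sum.elim_inr, Finset.sum_const, Finset.card_univ,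
      Fintype.card_unit, one_smul]
    rw [Equiv.sum_comp σ.symm (fun x => Matrix.vecMulVec (e x) (star (e x)))]
    abel
  · rw [Fintype.sum_sum_type]
    have h1 : ∀ x₀ : X,
        (Finset.univ.sup' Finset.univ_nonempty fun x =>
          ((Matrix.vecMulVec (e x) (star (e x)) *
            Matrix.vecMulVec (e x₀) (star (e x₀))).trace.re)) = 1 := by
      intro x₀
      apply le_antisymm
      · apply Finset.sup'_le
        intro x _
        rw [trace_vmv_mul_vmv e he]
        split <;> simp
      · have := Finset.le_sup' (f := fun x =>
          ((Matrix.vecMulVec (e x) (star (e x)) *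
            Matrix.vecMulVec (e x₀) (star (e x₀))).trace.re)) (Finset.mem_univ x₀)
        rwa [trace_vmv_mul_vmv e he, if_pos rfl] at this
    have h2 : ∀ x : X,
        (Matrix.vecMulVec (e x) (star (e x)) *
          (1 - ∑ x', Matrix.vecMulVec (e x') (star (e x')))).trace = 0 := by
      intro x
      rw [mul_sub, mul_one, Matrix.trace_sub, trace_vmv e he, Finset.mul_sum,
        Matrix.trace_sum]
      rw [Finset.sum_congr rfl fun x' (_ : x' ∈ Finset.univ) => trace_vmv_mul_vmv e he x x']
      simp
    simp only [Sum.elim_inl, Sum.elim_inr]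
    rw [Finset.sum_congr rfl fun i (_ : i ∈ Finset.univ) => h1 (σ.symm i)]
    have h3 : (∑ _u : Unit, Finset.univ.sup' Finset.univ_nonempty fun x =>
        ((Matrix.vecMulVec (e x) (star (e x)) *
          (1 - ∑ x', Matrix.vecMulVec (e x') (star (e x')))).trace.re)) = 0 := by
      rw [Fintype.sum_unique]
      have hf : (fun x : X =>
          ((Matrix.vecMulVec (e x) (star (e x)) *
            (1 - ∑ x', Matrix.vecMulVec (e x') (star (e x')))).trace.re)) =
          fun _ => (0 : ℝ) := funext fun x => by rw [h2 x]; simp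
      rw [hf, Finset.sup'_const]
    rw [h3]
    simp
end

section
/- Let X be a nonempty finite set, suppose d ≥ |X|, let {e_x}_{x∈X} be an orthonormal family in ℂ^d, and let ρ^x := e_x e_x† be the basis encoding. Then basis encoding is a universally optimal encoder: for every quantum encoding {σ^x}_{x∈X} of X into ℂ^d and every POVM {G_y}_{y∈Y'} on ℂ^d, Σ_{y∈Y'} max_{x∈X} Re tr(σ^x G_y) ≤ |X|, and there is a POVM {F_y}_{y∈Y} on ℂ^d with Σ_{y∈Y} max_{x∈X} Re tr(ρ^x F_y) = |X|. In particular, the supremum over all encodings and all POVMs of Σ_y max_x Re tr(ρ^x F_y) equals |X| and is attained by basis encoding. (This is the paper's Proposition 2.) -/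
open Matrix Finset
open scoped ComplexOrder


lemma trace_re_nonneg_of_psd {d : ℕ} {M : Matrix (Fin d) (Fin d) ℂ}
    (hM : M.PosSemidef) : 0 ≤ M.trace.re := by
  have h : ∀ i, 0 ≤ (M i i).re := fun i => by
    have h := hM.re_dotProduct_nonneg (Pi.single i 1)
    simpa [dotProduct, mulVec, Pi.single_apply] using h
  rw [Matrix.trace, Complex.re_sum]
  exact Finset.sum_nonneg fun i _ => h i

lemma trace_mul_re_nonneg {d : ℕ} {A B : Matrix (Fin d) (Fin d) ℂ}
    (hA : A.PosSemidef) (hB : B.PosSemidef) : 0 ≤ (A * B).trace.re := by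
  obtain ⟨s, hsH, hss⟩ : ∃ s : Matrix (Fin d) (Fin d) ℂ, sᴴ = s ∧ s * s = A :=
    by
      open scoped MatrixOrder in
      exact ⟨CFC.sqrt A, (CFC.sqrt_nonneg A).posSemidef.isHermitian, CFC.sqrt_mul_sqrt_self A hA.nonneg⟩
  have h1 : (A * B).trace = (sᴴ * B * s).trace := by
    rw [hsH, ← hss, mul_assoc, trace_mul_comm, mul_assoc]
  rw [h1]
  exact trace_re_nonneg_of_psd (hB.conjTranspose_mul_mul_same _)

lemma trace_vecMulVec_mul {d : ℕ} (a b : Fin d → ℂ) (M : Matrix (Fin d) (Fin d) ℂ) :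
    (vecMulVec a b * M).trace = b ⬝ᵥ (M *ᵥ a) := by
  simp only [Matrix.trace, Matrix.diag, Matrix.mul_apply, vecMulVec_apply, dotProduct,
    mulVec, Finset.mul_sum]
  rw [Finset.sum_comm]
  exact Finset.sum_congr rfl fun j _ => Finset.sum_congr rfl fun i _ => by ring

lemma vecMulVec_psd {d : ℕ} (a : Fin d → ℂ) : (vecMulVec a (star a)).PosSemidef := by
  refine PosSemidef.of_dotProduct_mulVec_nonneg ?_ ?_
  · ext i j
    simp [conjTranspose_apply, vecMulVec_apply, mul_comm]
  · intro x
    have : star x ⬝ᵥ (vecMulVec a (star a) *ᵥ x) = star (star a ⬝ᵥ x) * (star a ⬝ᵥ x) := by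
      simp only [dotProduct, mulVec, vecMulVec_apply, Pi.star_apply, Finset.mul_sum,
        Finset.sum_mul, star_sum, star_mul', star_star]
      rw [Finset.sum_comm]
      exact Finset.sum_congr rfl fun j _ => Finset.sum_congr rfl fun i _ => by ring
    rw [this]
    exact star_mul_self_nonneg _

lemma vecMulVec_mulVec' {d : ℕ} (a b v : Fin d → ℂ) :
    vecMulVec a b *ᵥ v = (b ⬝ᵥ v) • a := by
  funext i
  simp only [mulVec, vecMulVec_apply, dotProduct, Pi.smul_apply, smul_eq_mul,
    Finset.sum_mul]
  exact Finset.sum_congr rfl fun j _ => by ring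

lemma mul_vecMulVec' {d : ℕ} (M : Matrix (Fin d) (Fin d) ℂ) (a b : Fin d → ℂ) :
    M * vecMulVec a b = vecMulVec (M *ᵥ a) b := by
  ext i j
  simp only [Matrix.mul_apply, vecMulVec_apply, mulVec, dotProduct, Finset.sum_mul]
  exact Finset.sum_congr rfl fun k _ => by ring

lemma sum_mulVec' {d : ℕ} {ι : Type*} (s : Finset ι) (M : ι → Matrix (Fin d) (Fin d) ℂ)
    (v : Fin d → ℂ) : (∑ x ∈ s, M x) *ᵥ v = ∑ x ∈ s, M x *ᵥ v := by
  funext i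
  simp only [mulVec, dotProduct, Finset.sum_apply, Matrix.sum_apply, Finset.sum_mul]
  exact Finset.sum_comm

/-- **Proposition 2**: for `d ≥ |X|`, basis encoding `ρ^x = e_x e_x†` is a universally
optimal encoder: every encoding/POVM pair has `Σ_y max_x tr(σ^x G_y) ≤ |X|`, and basis
encoding achieves `Σ_y max_x tr(ρ^x F_y) = |X|` for some POVM, so it maximizes the
maximal quantum leakage with optimal value `log₂ |X|`. -/
theorem basis_encoding_universally_optimal
    {d : ℕ} {X : Type*} [Fintype X] [Nonempty X] [DecidableEq X]
    (hd : Fintype.card X ≤ d)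
    (e : X → (Fin d → ℂ))
    (he : ∀ x x', star (e x) ⬝ᵥ e x' = if x = x' then 1 else 0) :
    (∀ (Y' : Type) (instY' : Fintype Y') (σ : X → Matrix (Fin d) (Fin d) ℂ)
        (G : Y' → Matrix (Fin d) (Fin d) ℂ),
      (∀ x, (σ x).PosSemidef ∧ (σ x).trace = 1) →
      letI := instY'
      (∀ y, (G y).PosSemidef) → (∑ y, G y) = 1 →
      (∑ y, Finset.univ.sup' Finset.univ_nonempty fun x => ((σ x * G y).trace.re))
        ≤ (Fintype.card X : ℝ)) ∧
    (∃ (Y : Type) (instY : Fintype Y) (F : Y → Matrix (Fin d) (Fin d) ℂ),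
      letI := instY
      (∀ y, (F y).PosSemidef) ∧
      (∑ y, F y) = 1 ∧
      (∑ y, Finset.univ.sup' Finset.univ_nonempty fun x =>
          ((Matrix.vecMulVec (e x) (star (e x)) * F y).trace.re))
        = (Fintype.card X : ℝ)) := by
  classical
  constructor
  · intro Y' instY' σ G hσ hG hGsum
    have hnn : ∀ (y : Y') (x : X), 0 ≤ ((σ x * G y).trace.re) :=
      fun y x => trace_mul_re_nonneg (hσ x).1 (hG y)
    have step1 : (∑ y, Finset.univ.sup' Finset.univ_nonempty
          fun x => ((σ x * G y).trace.re))
        ≤ ∑ y, ∑ x, ((σ x * G y).trace.re) := by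
      refine Finset.sum_le_sum fun y _ => Finset.sup'_le _ _ fun x _ =>
        Finset.single_le_sum (fun x' _ => hnn y x') (Finset.mem_univ x)
    have step2 : (∑ y, ∑ x, ((σ x * G y).trace.re)) = (Fintype.card X : ℝ) := by
      rw [Finset.sum_comm]
      have hx : ∀ x : X, (∑ y, ((σ x * G y).trace.re)) = 1 := by
        intro x
        rw [← Complex.re_sum]
        have : (∑ y, (σ x * G y).trace) = (σ x * ∑ y, G y).trace := by
          rw [Finset.mul_sum, Matrix.trace_sum]
        rw [this, hGsum, mul_one, (hσ x).2, Complex.one_re]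
      simp [hx]
    linarith
  · set S : Matrix (Fin d) (Fin d) ℂ := ∑ x : X, vecMulVec (e x) (star (e x)) with hS
    have hSv : ∀ x', S *ᵥ e x' = e x' := by
      intro x'
      rw [hS, sum_mulVec']
      have : ∀ x : X, vecMulVec (e x) (star (e x)) *ᵥ e x'
          = (if x = x' then (1:ℂ) else 0) • e x := by
        intro x; rw [vecMulVec_mulVec', he]
      simp only [this]
      simp [Finset.sum_ite_eq]
    have hSherm : Sᴴ = S := by
      rw [hS, conjTranspose_sum]
      exact Finset.sum_congr rfl fun x _ => (vecMulVec_psd (e x)).1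
    have hSS : S * S = S := by
      conv_lhs => rw [hS, Finset.mul_sum]
      rw [hS]
      exact Finset.sum_congr rfl fun x _ => by rw [mul_vecMulVec', hSv]
    have hP : (1 - S).PosSemidef := by
      have hfact : (1 - S) = (1 - S)ᴴ * (1 - S) := by
        rw [conjTranspose_sub, conjTranspose_one, hSherm]
        rw [sub_mul, one_mul, mul_sub, mul_one, hSS]
        abel
      rw [hfact]
      exact posSemidef_conjTranspose_mul_self _
    let φ := (Fintype.equivFin X).symm
    refine ⟨Option (Fin (Fintype.card X)), inferInstance,
      fun y => y.elim (1 - S) (fun i => vecMulVec (e (φ i)) (star (e (φ i)))), ?_, ?_, ?_⟩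
    · intro y
      cases y with
      | none => exact hP
      | some i => exact vecMulVec_psd (e (φ i))
    · rw [Fintype.sum_option]
      simp only [Option.elim]
      rw [Fintype.sum_equiv φ _ (fun x => vecMulVec (e x) (star (e x))) (fun i => rfl),
        ← hS, sub_add_cancel]
    · rw [Fintype.sum_option]
      simp only [Option.elim]
      have hnone : (Finset.univ.sup' Finset.univ_nonempty fun x =>
          ((vecMulVec (e x) (star (e x)) * (1 - S)).trace.re)) = 0 := by
        have hz : ∀ x : X, ((vecMulVec (e x) (star (e x)) * (1 - S)).trace.re) = 0 := by
          intro x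
          rw [trace_vecMulVec_mul, Matrix.sub_mulVec, Matrix.one_mulVec, hSv, sub_self]
          simp
        calc (Finset.univ.sup' Finset.univ_nonempty fun x =>
              ((vecMulVec (e x) (star (e x)) * (1 - S)).trace.re))
            = Finset.univ.sup' Finset.univ_nonempty fun _ : X => (0:ℝ) :=
              Finset.sup'_congr _ rfl (fun x _ => hz x)
          _ = 0 := Finset.sup'_const _ _
      have hsome' : ∀ x : X, (Finset.univ.sup' Finset.univ_nonempty fun x' =>
          ((vecMulVec (e x') (star (e x')) * vecMulVec (e x) (star (e x))).trace.re)) = 1 := by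
        intro x
        have hval : ∀ x' : X,
            ((vecMulVec (e x') (star (e x')) * vecMulVec (e x) (star (e x))).trace.re)
            = if x' = x then 1 else 0 := by
          intro x'
          rw [trace_vecMulVec_mul, vecMulVec_mulVec', dotProduct_smul, he, he]
          by_cases h : x = x'
          · subst h; simp
          · simp [h, Ne.symm h]
        apply le_antisymm
        · refine Finset.sup'_le _ _ fun x' _ => ?_
          rw [hval x']
          split <;> norm_num
        · have := Finset.le_sup' (f := fun x' =>
            ((vecMulVec (e x') (star (e x')) * vecMulVec (e x) (star (e x))).trace.re))
            (Finset.mem_univ x)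
          rwa [hval x, if_pos rfl] at this
      rw [hnone, zero_add]
      rw [Fintype.sum_equiv φ _ (fun x => Finset.univ.sup' Finset.univ_nonempty fun x' =>
          ((vecMulVec (e x') (star (e x')) * vecMulVec (e x) (star (e x))).trace.re))
          (fun i => rfl)]
      simp [hsome']
end
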